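/- Under the assumptions of the 2D truncated combination error expansion, if ‖C₁(h)‖ ≤ κ₁, ‖C₂(h)‖ ≤ κ₂ for all h, and ‖D(h_i, h_j)‖ ≤ β for all h_i, h_j, then the combined grid-based error is bounded by h_n²·(κ₁ + κ₂ + β·L²·2^{-2τ}·(5(n - τ) + 1)). -/
import Mathlib


/-- Grid-based error bound for the 2D truncated combination technique: if `|C₁(h)| ≤ κ₁`,
`|C₂(h)| ≤ κ₂` for all `h` and `|D(h_i, h_j)| ≤ β` for all `h_i, h_j`, then the combined
grid-based error is bounded by `h_n²·(κ₁ + κ₂ + β·L²·2^{-2τ}·(5(n-τ)+1))`. -/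
theorem truncated_combination_error_bound (L : ℝ) (hL : 0 < L) (n τ : ℕ)
    (h1 : 1 ≤ τ) (h2 : τ ≤ n) (C₁ C₂ : ℝ → ℝ) (D : ℝ → ℝ → ℝ)
    (κ₁ κ₂ β : ℝ)
    (hC₁ : ∀ h : ℝ, |C₁ h| ≤ κ₁) (hC₂ : ∀ h : ℝ, |C₂ h| ≤ κ₂)
    (hD : ∀ hi hj : ℝ, |D hi hj| ≤ β) :
    let h : ℕ → ℝ := fun m => L / 2 ^ m
    let E : ℕ → ℕ → ℝ := fun i j =>
      C₁ (h i) * (h i) ^ 2 + C₂ (h j) * (h j) ^ 2 + D (h i) (h j) * (h i) ^ 2 * (h j) ^ 2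
    |(∑ i ∈ Finset.Icc τ n, E i (n + τ - i)) -
        ∑ i ∈ Finset.Icc τ (n - 1), E i (n + τ - 1 - i)| ≤
      (h n) ^ 2 * (κ₁ + κ₂ + β * L ^ 2 / 2 ^ (2 * τ) * (5 * ((n : ℝ) - τ) + 1)) := by
  intro h E
  have hβ : 0 ≤ β := le_trans (abs_nonneg _) (hD 0 0)
  have hn1 : 1 ≤ n := le_trans h1 h2
  -- key power identities
  have key : ∀ i j : ℕ, i + j = n + τ →
      (h i) ^ 2 * (h j) ^ 2 = (h n) ^ 2 * (L ^ 2 / 2 ^ (2 * τ)) := by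
    intro i j hij
    have h3 : (2:ℝ) ^ i * 2 ^ j = 2 ^ n * 2 ^ τ := by
      rw [← pow_add, ← pow_add, hij]
    have e1 : ((2:ℝ) ^ i) ^ 2 * ((2:ℝ) ^ j) ^ 2 = ((2:ℝ) ^ n) ^ 2 * 2 ^ (2 * τ) := by
      rw [show 2 * τ = τ * 2 by ring, pow_mul]
      linear_combination ((2:ℝ) ^ i * 2 ^ j + 2 ^ n * 2 ^ τ) * h3
    show (L / 2 ^ i) ^ 2 * (L / 2 ^ j) ^ 2 = (L / 2 ^ n) ^ 2 * (L ^ 2 / 2 ^ (2 * τ))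
    calc (L / 2 ^ i) ^ 2 * (L / 2 ^ j) ^ 2
        = L ^ 2 * L ^ 2 / (((2:ℝ) ^ i) ^ 2 * ((2:ℝ) ^ j) ^ 2) := by ring
      _ = L ^ 2 * L ^ 2 / (((2:ℝ) ^ n) ^ 2 * 2 ^ (2 * τ)) := by rw [e1]
      _ = (L / 2 ^ n) ^ 2 * (L ^ 2 / 2 ^ (2 * τ)) := by ring
  have key2 : ∀ i j : ℕ, i + j + 1 = n + τ →
      (h i) ^ 2 * (h j) ^ 2 = 4 * ((h n) ^ 2 * (L ^ 2 / 2 ^ (2 * τ))) := by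
    intro i j hij
    have h3 : (2:ℝ) ^ i * 2 ^ j * 2 = 2 ^ n * 2 ^ τ := by
      have : (2:ℝ) ^ i * 2 ^ j * 2 = 2 ^ (i + j + 1) := by rw [pow_add, pow_add]; ring
      rw [this, hij, pow_add]
    have e1 : ((2:ℝ) ^ i) ^ 2 * ((2:ℝ) ^ j) ^ 2 * 4 = ((2:ℝ) ^ n) ^ 2 * 2 ^ (2 * τ) := by
      rw [show 2 * τ = τ * 2 by ring, pow_mul]
      linear_combination ((2:ℝ) ^ i * 2 ^ j * 2 + 2 ^ n * 2 ^ τ) * h3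
    show (L / 2 ^ i) ^ 2 * (L / 2 ^ j) ^ 2 = 4 * ((L / 2 ^ n) ^ 2 * (L ^ 2 / 2 ^ (2 * τ)))
    have h4 : ((4:ℝ)) ≠ 0 := by norm_num
    calc (L / 2 ^ i) ^ 2 * (L / 2 ^ j) ^ 2
        = L ^ 2 * L ^ 2 * 4 / (((2:ℝ) ^ i) ^ 2 * ((2:ℝ) ^ j) ^ 2 * 4) := by
          rw [mul_div_mul_right _ _ h4]; ring
      _ = L ^ 2 * L ^ 2 * 4 / (((2:ℝ) ^ n) ^ 2 * 2 ^ (2 * τ)) := by rw [e1]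
      _ = 4 * ((L / 2 ^ n) ^ 2 * (L ^ 2 / 2 ^ (2 * τ))) := by ring
  set A : ℕ → ℝ := fun i => C₁ (h i) * (h i) ^ 2 with hAdef
  set B : ℕ → ℝ := fun j => C₂ (h j) * (h j) ^ 2 with hBdef
  set Dt : ℕ → ℕ → ℝ := fun i j => D (h i) (h j) * (h i) ^ 2 * (h j) ^ 2 with hDtdef
  have hsplit1 : (∑ i ∈ Finset.Icc τ n, E i (n + τ - i)) =
      (∑ i ∈ Finset.Icc τ n, A i) + (∑ i ∈ Finset.Icc τ n, B (n + τ - i))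
        + (∑ i ∈ Finset.Icc τ n, Dt i (n + τ - i)) := by
    rw [← Finset.sum_add_distrib, ← Finset.sum_add_distrib]
  have hsplit2 : (∑ i ∈ Finset.Icc τ (n-1), E i (n + τ - 1 - i)) =
      (∑ i ∈ Finset.Icc τ (n-1), A i) + (∑ i ∈ Finset.Icc τ (n-1), B (n + τ - 1 - i))
        + (∑ i ∈ Finset.Icc τ (n-1), Dt i (n + τ - 1 - i)) := by
    rw [← Finset.sum_add_distrib, ← Finset.sum_add_distrib]
  have hreind1 : (∑ i ∈ Finset.Icc τ n, B (n + τ - i)) = ∑ i ∈ Finset.Icc τ n, B i := by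
    refine Finset.sum_nbij' (fun i => n + τ - i) (fun i => n + τ - i) ?_ ?_ ?_ ?_ ?_ <;>
      intro a ha <;> simp only [Finset.mem_Icc] at ha ⊢ <;> first | rfl | omega
  have hreind2 : (∑ i ∈ Finset.Icc τ (n-1), B (n + τ - 1 - i)) =
      ∑ i ∈ Finset.Icc τ (n-1), B i := by
    refine Finset.sum_nbij' (fun i => n + τ - 1 - i) (fun i => n + τ - 1 - i) ?_ ?_ ?_ ?_ ?_ <;>
      intro a ha <;> simp only [Finset.mem_Icc] at ha ⊢ <;> first | rfl | omega
  have hAtel : (∑ i ∈ Finset.Icc τ n, A i) = (∑ i ∈ Finset.Icc τ (n-1), A i) + A n := by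
    have := Finset.sum_Icc_succ_top (f := A) (a := τ) (b := n - 1) (by omega)
    rwa [show n - 1 + 1 = n by omega] at this
  have hBtel : (∑ i ∈ Finset.Icc τ n, B i) = (∑ i ∈ Finset.Icc τ (n-1), B i) + B n := by
    have := Finset.sum_Icc_succ_top (f := B) (a := τ) (b := n - 1) (by omega)
    rwa [show n - 1 + 1 = n by omega] at this
  set c : ℝ := (h n) ^ 2 * (L ^ 2 / 2 ^ (2 * τ)) with hc
  have hcpos : 0 ≤ c := by positivity
  have hD1 : |∑ i ∈ Finset.Icc τ n, Dt i (n + τ - i)| ≤ ((n : ℝ) - τ + 1) * (β * c) := by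
    calc |∑ i ∈ Finset.Icc τ n, Dt i (n + τ - i)|
        ≤ ∑ i ∈ Finset.Icc τ n, |Dt i (n + τ - i)| := Finset.abs_sum_le_sum_abs _ _
      _ ≤ ∑ _i ∈ Finset.Icc τ n, β * c := by
          refine Finset.sum_le_sum fun i hi => ?_
          simp only [Finset.mem_Icc] at hi
          have hk := key i (n + τ - i) (by omega)
          have : |Dt i (n + τ - i)| = |D (h i) (h (n + τ - i))| * ((h i) ^ 2 * (h (n+τ-i)) ^ 2) := by
            show |D (h i) (h (n + τ - i)) * (h i) ^ 2 * (h (n+τ-i)) ^ 2| = _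
            rw [abs_mul, abs_mul, abs_of_nonneg (sq_nonneg (h i)),
              abs_of_nonneg (sq_nonneg (h (n+τ-i))), mul_assoc]
          rw [this, hk]
          exact mul_le_mul_of_nonneg_right (hD _ _) hcpos
      _ = ((n : ℝ) - τ + 1) * (β * c) := by
          rw [Finset.sum_const, Nat.card_Icc, nsmul_eq_mul]
          congr 1
          have : n + 1 - τ = (n - τ) + 1 := by omega
          rw [this]
          push_cast [Nat.cast_sub h2]
          ring
  have hD2 : |∑ i ∈ Finset.Icc τ (n-1), Dt i (n + τ - 1 - i)| ≤ ((n : ℝ) - τ) * (4 * (β * c)) := by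
    calc |∑ i ∈ Finset.Icc τ (n-1), Dt i (n + τ - 1 - i)|
        ≤ ∑ i ∈ Finset.Icc τ (n-1), |Dt i (n + τ - 1 - i)| := Finset.abs_sum_le_sum_abs _ _
      _ ≤ ∑ _i ∈ Finset.Icc τ (n-1), 4 * (β * c) := by
          refine Finset.sum_le_sum fun i hi => ?_
          simp only [Finset.mem_Icc] at hi
          have hk := key2 i (n + τ - 1 - i) (by omega)
          have : |Dt i (n + τ - 1 - i)| = |D (h i) (h (n + τ - 1 - i))| * ((h i) ^ 2 * (h (n+τ-1-i)) ^ 2) := by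
            show |D (h i) (h (n + τ - 1 - i)) * (h i) ^ 2 * (h (n+τ-1-i)) ^ 2| = _
            rw [abs_mul, abs_mul, abs_of_nonneg (sq_nonneg (h i)),
              abs_of_nonneg (sq_nonneg (h (n+τ-1-i))), mul_assoc]
          rw [this, hk]
          calc |D (h i) (h (n + τ - 1 - i))| * (4 * c) ≤ β * (4 * c) :=
                mul_le_mul_of_nonneg_right (hD _ _) (by positivity)
            _ = 4 * (β * c) := by ring
      _ = ((n : ℝ) - τ) * (4 * (β * c)) := by
          rw [Finset.sum_const, Nat.card_Icc, nsmul_eq_mul]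
          congr 1
          rw [show n - 1 + 1 - τ = n - τ by omega]
          push_cast [Nat.cast_sub h2]
          ring
  have hAn : |A n| ≤ κ₁ * (h n) ^ 2 := by
    simp only [hAdef, abs_mul]
    rw [abs_of_nonneg (by positivity : (0:ℝ) ≤ (h n)^2)]
    exact mul_le_mul_of_nonneg_right (hC₁ _) (by positivity)
  have hBn : |B n| ≤ κ₂ * (h n) ^ 2 := by
    simp only [hBdef, abs_mul]
    rw [abs_of_nonneg (by positivity : (0:ℝ) ≤ (h n)^2)]
    exact mul_le_mul_of_nonneg_right (hC₂ _) (by positivity)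
  rw [hsplit1, hsplit2, hreind1, hreind2, hAtel, hBtel]
  have heq : ((∑ i ∈ Finset.Icc τ (n-1), A i) + A n + ((∑ i ∈ Finset.Icc τ (n-1), B i) + B n)
      + (∑ i ∈ Finset.Icc τ n, Dt i (n + τ - i)))
      - ((∑ i ∈ Finset.Icc τ (n-1), A i) + (∑ i ∈ Finset.Icc τ (n-1), B i)
      + (∑ i ∈ Finset.Icc τ (n-1), Dt i (n + τ - 1 - i)))
      = A n + B n + ((∑ i ∈ Finset.Icc τ n, Dt i (n + τ - i))
        - (∑ i ∈ Finset.Icc τ (n-1), Dt i (n + τ - 1 - i))) := by ring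
  rw [heq]
  calc |A n + B n + ((∑ i ∈ Finset.Icc τ n, Dt i (n + τ - i))
        - (∑ i ∈ Finset.Icc τ (n-1), Dt i (n + τ - 1 - i)))|
      ≤ |A n| + |B n| + (|∑ i ∈ Finset.Icc τ n, Dt i (n + τ - i)|
        + |∑ i ∈ Finset.Icc τ (n-1), Dt i (n + τ - 1 - i)|) := by
        refine le_trans (abs_add_le _ _) ?_
        exact add_le_add (abs_add_le _ _) (abs_sub _ _)
    _ ≤ κ₁ * (h n)^2 + κ₂ * (h n)^2 + (((n : ℝ) - τ + 1) * (β * c) + ((n : ℝ) - τ) * (4 * (β * c))) := by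
        gcongr
    _ = (h n) ^ 2 * (κ₁ + κ₂ + β * L ^ 2 / 2 ^ (2 * τ) * (5 * ((n : ℝ) - τ) + 1)) := by
        rw [hc]; ring
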